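/- The sheaf of continuous real-valued functions on X_crs is not soft: the restriction map C(X_crs, ℝ) → C(A, ℝ) = Maps(A, ℝ) to the closed discrete subset A = ⋃_{n≥1} e_n^0 is not surjective; equivalently, there is a real-valued function on A (e.g. any unbounded one) that does not extend to a continuous function on X_crs. -/

import Mathlib

open Set Topology Filter

noncomputable section

/-- The closed unit disk. -/
def D : Type := {z : ℂ // ‖z‖ ≤ 1}

instance : TopologicalSpace D := instTopologicalSpaceSubtype

/-- The wedge point on each disk. -/
def basept : D := ⟨1, by norm_num⟩

/-- The outer point (outer 0-cell) on each disk. -/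
def outerpt : D := ⟨-1, by norm_num⟩

/-- Wedge relation: glue all copies of the base point together. -/
def wsetoid : Setoid (ℕ × D) where
  r p q := p = q ∨ (p.2 = basept ∧ q.2 = basept)
  iseqv := by
    constructor
    · intro p; exact Or.inl rfl
    · rintro p q (rfl | ⟨h1, h2⟩)
      · exact Or.inl rfl
      · exact Or.inr ⟨h2, h1⟩
    · rintro p q r (rfl | ⟨h1, h2⟩) (rfl | ⟨h3, h4⟩)
      · exact Or.inl rfl
      · exact Or.inr ⟨h3, h4⟩
      · exact Or.inr ⟨h1, h2⟩
      · exact Or.inr ⟨h1, h4⟩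

/-- The wedge of countably many closed 2-disks, with the weak (CW) topology. -/
def X : Type := Quotient wsetoid

instance : TopologicalSpace X := instTopologicalSpaceQuotient

/-- The point of the `n`-th disk with disk-coordinate `z`. -/
def pt (n : ℕ) (z : D) : X := Quotient.mk wsetoid (n, z)

/-- The origin (the wedge point `x`). -/
def origin : X := pt 0 basept

/-- The outer 0-cell `e_n^0` of the `n`-th disk. -/
def outer (n : ℕ) : X := pt n outerpt

/-- The `n`-th closed 2-cell `C_n`. -/
def cell (n : ℕ) : Set X := Set.range (pt n)

/-- The open sets of the coarser topology `τ`: CW-open sets which either do not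
contain the origin, or contain all but finitely many punctured cells `C_n \ {e_n^0}`. -/
def crsOpen (U : Set X) : Prop :=
  IsOpen U ∧ (origin ∉ U ∨ {n : ℕ | ¬ (cell n \ {outer n} ⊆ U)}.Finite)

/-- The coarser topology `τ` on the wedge of disks. -/
def crsTop : TopologicalSpace X where
  IsOpen := crsOpen
  isOpen_univ := ⟨isOpen_univ, Or.inr (Set.Finite.subset Set.finite_empty
    (fun _ hn => absurd (Set.subset_univ _) hn))⟩
  isOpen_inter := by
    rintro U V ⟨hU, hU2⟩ ⟨hV, hV2⟩
    refine ⟨hU.inter hV, ?_⟩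
    by_cases hx : origin ∈ U ∩ V
    · have h1 := hU2.resolve_left (fun h => h hx.1)
      have h2 := hV2.resolve_left (fun h => h hx.2)
      refine Or.inr ((h1.union h2).subset ?_)
      intro n hn
      by_contra hc
      simp only [Set.mem_union, Set.mem_setOf_eq, not_or, not_not] at hc
      exact hn (Set.subset_inter hc.1 hc.2)
    · exact Or.inl hx
  isOpen_sUnion := by
    intro S hS
    refine ⟨isOpen_sUnion fun U hU => (hS U hU).1, ?_⟩
    by_cases hx : origin ∈ ⋃₀ S
    · obtain ⟨U, hUS, hxU⟩ := hx
      have h1 := (hS U hUS).2.resolve_left (fun h => h hxU)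
      refine Or.inr (h1.subset ?_)
      intro n hn hsub
      exact hn (hsub.trans (Set.subset_sUnion_of_mem hUS))
    · exact Or.inl hx

/-- The open set `U₀`: complement of all the outer 0-cells. -/
def U0 : Set X := {y | ∀ n, y ≠ outer n}

/-- The set `A` of all outer 0-cells. -/
def A : Set X := Set.range outer

/-- the sheaf of continuous real-valued functions on `X_crs` is not soft:
not every real-valued function on the closed discrete subset `A` extends to a continuous
function on `X_crs`. -/

lemma basept_ne_outerpt : basept ≠ outerpt := by
  intro h
  have : (1 : ℂ) = -1 := congrArg Subtype.val h
  norm_num at this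

lemma outer_injective : Function.Injective outer := by
  intro n m h
  rcases Quotient.exact h with h1 | ⟨h1, _⟩
  · exact (Prod.mk.injEq _ _ _ _).mp h1 |>.1
  · exact absurd h1.symm basept_ne_outerpt

lemma pt_basept (n : ℕ) : pt n basept = origin :=
  Quotient.sound (Or.inr ⟨rfl, rfl⟩)

lemma pt_ne_outer {n : ℕ} {z : D} (hz : z ≠ outerpt) : pt n z ≠ outer n := by
  intro h
  rcases Quotient.exact h with h1 | ⟨_, h2⟩
  · exact hz ((Prod.mk.injEq _ _ _ _).mp h1 |>.2)
  · exact basept_ne_outerpt h2.symm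

lemma continuous_pt (n : ℕ) : @Continuous D X _ crsTop (pt n) := by
  rw [continuous_def]
  intro U hU
  exact hU.1.preimage (continuous_quotient_mk'.comp (Continuous.prodMk_right n))

lemma outerpt_mem_closure : outerpt ∈ closure {z : D | z ≠ outerpt} := by
  have h3 : ∀ k : ℕ, (0 : ℝ) < ((k : ℝ) + 1)⁻¹ := fun k => by positivity
  have hmem : ∀ k : ℕ, ‖((-(1 - ((k : ℝ) + 1)⁻¹) : ℝ) : ℂ)‖ ≤ 1 := by
    intro k
    rw [Complex.norm_real, Real.norm_eq_abs, abs_neg]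
    have h2 : ((k : ℝ) + 1)⁻¹ ≤ 1 := by
      rw [inv_le_one_iff₀]; right
      have : (0:ℝ) ≤ (k:ℝ) := Nat.cast_nonneg k
      linarith
    rw [abs_of_nonneg (by linarith [h3 k])]
    linarith [h3 k]
  set f : ℕ → D := fun k => ⟨((-(1 - ((k : ℝ) + 1)⁻¹) : ℝ) : ℂ), hmem k⟩ with hf
  have hreal : Filter.Tendsto (fun k : ℕ => (-(1 - ((k : ℝ) + 1)⁻¹) : ℝ))
      Filter.atTop (𝓝 (-1)) := by
    have h0 := tendsto_one_div_add_atTop_nhds_zero_nat (𝕜 := ℝ)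
    simp only [one_div] at h0
    have h2 : Filter.Tendsto (fun k : ℕ => (1 : ℝ) - ((k : ℝ) + 1)⁻¹)
        Filter.atTop (𝓝 1) := by simpa using tendsto_const_nhds.sub h0
    simpa using h2.neg
  have htends : Filter.Tendsto f Filter.atTop (𝓝 outerpt) := by
    refine (tendsto_subtype_rng (p := fun z : ℂ => ‖z‖ ≤ 1)).2 ?_
    have hc := (Complex.continuous_ofReal.tendsto (-1)).comp hreal
    have : ((-1 : ℝ) : ℂ) = (outerpt : D).val := by norm_num [outerpt]
    rw [this] at hc
    exact hc
  refine mem_closure_of_tendsto htends ?_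
  filter_upwards with k hk
  have hv : ((-(1 - ((k : ℝ) + 1)⁻¹) : ℝ) : ℂ) = -1 := congrArg Subtype.val hk
  have hre := congrArg Complex.re hv
  simp only [Complex.ofReal_re, Complex.neg_re, Complex.one_re] at hre
  have := h3 k
  linarith [hre]

theorem crs_not_soft :
    ¬ ∀ φ : A → ℝ, ∃ g : X → ℝ,
        @Continuous X ℝ crsTop _ g ∧ ∀ a : A, g a = φ a := by
  intro h
  set φ : A → ℝ := fun a => (a.2.choose : ℝ) with hφ
  obtain ⟨g, hg, hext⟩ := h φ
  have hφval : ∀ n : ℕ, g (outer n) = n := by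
    intro n
    have ha : outer n ∈ A := ⟨n, rfl⟩
    have := hext ⟨outer n, ha⟩
    rw [this, hφ]
    have : ha.choose = n := outer_injective ha.choose_spec
    simp [this]
  set U : Set X := g ⁻¹' (Metric.ball (g origin) 1) with hUdef
  have hUopen : crsOpen U :=
    (@continuous_def X ℝ crsTop _ g).mp hg (Metric.ball (g origin) 1) Metric.isOpen_ball
  have hoU : origin ∈ U := by simp [hUdef]
  have hF : {n : ℕ | ¬ (cell n \ {outer n} ⊆ U)}.Finite :=
    hUopen.2.resolve_left (fun hc => hc hoU)
  obtain ⟨n, hn⟩ :=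
    ((hF.union (Set.finite_Iic (Nat.ceil (|g origin| + 1)))).infinite_compl).nonempty
  simp only [Set.mem_compl_iff, Set.mem_union, Set.mem_setOf_eq, Set.mem_Iic, not_or, not_not,
    not_le] at hn
  obtain ⟨hsub, hlt⟩ := hn
  have hnR : |g origin| + 1 < (n : ℝ) := lt_of_le_of_lt (Nat.le_ceil _) (by exact_mod_cast hlt)
  have hcont : Continuous (g ∘ pt n) :=
    @Continuous.comp D X ℝ _ crsTop _ _ _ hg (continuous_pt n)
  have hSclosed : IsClosed ((g ∘ pt n) ⁻¹' Metric.closedBall (g origin) 1) :=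
    IsClosed.preimage hcont Metric.isClosed_closedBall
  have hsubS : {z : D | z ≠ outerpt} ⊆ (g ∘ pt n) ⁻¹' Metric.closedBall (g origin) 1 := by
    intro z hz
    have hzU : pt n z ∈ U := by
      by_cases hb : z = basept
      · rw [hb, pt_basept]; exact hoU
      · exact hsub ⟨⟨z, rfl⟩, pt_ne_outer hz⟩
    have : g (pt n z) ∈ Metric.ball (g origin) 1 := hzU
    exact Metric.ball_subset_closedBall this
  have houter : outerpt ∈ (g ∘ pt n) ⁻¹' Metric.closedBall (g origin) 1 :=
    hSclosed.closure_subset ((closure_mono hsubS) outerpt_mem_closure)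
  have hdist : |g (outer n) - g origin| ≤ 1 := by
    have := houter
    simp only [Set.mem_preimage, Function.comp_apply, Metric.mem_closedBall,
      Real.dist_eq] at this
    exact this
  rw [hφval n] at hdist
  have habs : (n : ℝ) - |g origin| ≤ |(n : ℝ) - g origin| := by
    have h1 := abs_sub_abs_le_abs_sub (n : ℝ) (g origin)
    have h2 : |(n : ℝ)| = (n : ℝ) := abs_of_nonneg (by positivity)
    linarith
  linarith

end
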